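/- Let H be a Hilbert space and S : H → H nonexpansive (‖S(x) − S(y)‖ ≤ ‖x − y‖) with at least one fixed point. Let {κ_n} ⊂ (0,1] satisfy Σ κ_n(1 − κ_n) = ∞. Then the Krasnosel'skii–Mann iteration Y_{n+1} = (1 − κ_n)Y_n + κ_n S(Y_n) converges weakly to a fixed point of S. -/

import Mathlib

open Filter Topology

private lemma km_norm_combo_sq {H : Type*} [NormedAddCommGroup H] [InnerProductSpace ℝ H]
    (t : ℝ) (a b : H) :
    ‖(1 - t) • a + t • b‖ ^ 2
      = (1 - t) * ‖a‖ ^ 2 + t * ‖b‖ ^ 2 - t * (1 - t) * ‖a - b‖ ^ 2 := by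
  rw [← real_inner_self_eq_norm_sq, ← real_inner_self_eq_norm_sq a,
    ← real_inner_self_eq_norm_sq b, ← real_inner_self_eq_norm_sq (a - b)]
  simp only [inner_add_left, inner_add_right, inner_sub_left, inner_sub_right,
    real_inner_smul_left, real_inner_smul_right, real_inner_comm a b]
  ring

set_option maxHeartbeats 2000000 in
/-- Krasnosel'skii–Mann theorem: for a nonexpansive map `S` on a real Hilbert
space with a fixed point, and relaxation parameters `κ n ∈ (0,1]` with
`∑ κ n (1 - κ n) = ∞`, the iteration `Y (n+1) = (1 - κ n) • Y n + κ n • S (Y n)`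
converges weakly to a fixed point of `S`. -/
theorem stmt_4 {H : Type*} [NormedAddCommGroup H] [InnerProductSpace ℝ H]
    [CompleteSpace H]
    (S : H → H) (hS : ∀ x y : H, ‖S x - S y‖ ≤ ‖x - y‖)
    (hfixne : ∃ z : H, S z = z)
    (κ : ℕ → ℝ) (hκ : ∀ n, κ n ∈ Set.Ioc (0 : ℝ) 1)
    (hdiv : ¬ Summable (fun n => κ n * (1 - κ n)))
    (Y : ℕ → H) (hY : ∀ n, Y (n + 1) = (1 - κ n) • Y n + κ n • S (Y n)) :
    ∃ Ystar : H, S Ystar = Ystar ∧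
      ∀ z : H, Tendsto (fun n => (inner ℝ (Y n) z : ℝ)) atTop (𝓝 (inner ℝ Ystar z)) := by
  obtain ⟨z0, hz0⟩ := hfixne
  set r : ℕ → ℝ := fun n => ‖S (Y n) - Y n‖ with hr_def
  have hr_nonneg : ∀ n, 0 ≤ r n := fun n => norm_nonneg _
  -- Fejér inequality
  have hfejer : ∀ p : H, S p = p → ∀ n,
      ‖Y (n + 1) - p‖ ^ 2 ≤ ‖Y n - p‖ ^ 2 - κ n * (1 - κ n) * r n ^ 2 := by
    intro p hp n
    have h1 : Y (n + 1) - p = (1 - κ n) • (Y n - p) + κ n • (S (Y n) - p) := by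
      rw [hY n]; module
    have h2 : ‖S (Y n) - p‖ ≤ ‖Y n - p‖ := by
      calc ‖S (Y n) - p‖ = ‖S (Y n) - S p‖ := by rw [hp]
      _ ≤ ‖Y n - p‖ := hS _ _
    have h3 : (Y n - p) - (S (Y n) - p) = Y n - S (Y n) := by abel
    rw [h1, km_norm_combo_sq, h3]
    have h4 : ‖Y n - S (Y n)‖ = r n := norm_sub_rev _ _
    rw [h4]
    have hk := hκ n
    have hsq : ‖S (Y n) - p‖ ^ 2 ≤ ‖Y n - p‖ ^ 2 :=
      pow_le_pow_left₀ (norm_nonneg _) h2 2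
    nlinarith [hk.1, hsq]
  -- distance to a fixed point is antitone (squared)
  have hanti : ∀ p : H, S p = p → Antitone (fun n => ‖Y n - p‖ ^ 2) := by
    intro p hp
    apply antitone_nat_of_succ_le
    intro n
    have := hfejer p hp n
    have hk := hκ n
    have hnn : 0 ≤ κ n * (1 - κ n) * r n ^ 2 :=
      mul_nonneg (mul_nonneg hk.1.le (by linarith [hk.2])) (sq_nonneg _)
    linarith
  -- boundedness
  have hub : ∀ n, ‖Y n - z0‖ ^ 2 ≤ ‖Y 0 - z0‖ ^ 2 := fun n =>
    hanti z0 hz0 (Nat.zero_le n)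
  set B : ℝ := ‖Y 0 - z0‖ + ‖z0‖ with hB_def
  have hYb : ∀ n, ‖Y n‖ ≤ B := by
    intro n
    have h1 : ‖Y n - z0‖ ≤ ‖Y 0 - z0‖ := by
      have := hub n
      nlinarith [norm_nonneg (Y n - z0), norm_nonneg (Y 0 - z0)]
    calc ‖Y n‖ = ‖(Y n - z0) + z0‖ := by rw [sub_add_cancel]
    _ ≤ ‖Y n - z0‖ + ‖z0‖ := norm_add_le _ _
    _ ≤ B := by rw [hB_def]; linarith
  have hB_nonneg : 0 ≤ B := le_trans (norm_nonneg _) (hYb 0)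
  -- residual is antitone
  have hr_anti : Antitone r := by
    apply antitone_nat_of_succ_le
    intro n
    have hk := hκ n
    have hd : Y (n + 1) - Y n = κ n • (S (Y n) - Y n) := by rw [hY n]; module
    have hd2 : S (Y n) - Y (n + 1) = (1 - κ n) • (S (Y n) - Y n) := by
      rw [hY n]; module
    calc r (n + 1) = ‖S (Y (n + 1)) - Y (n + 1)‖ := rfl
    _ ≤ ‖S (Y (n + 1)) - S (Y n)‖ + ‖S (Y n) - Y (n + 1)‖ :=
        norm_sub_le_norm_sub_add_norm_sub _ _ _
    _ ≤ ‖Y (n + 1) - Y n‖ + ‖S (Y n) - Y (n + 1)‖ := by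
        have := hS (Y (n + 1)) (Y n); linarith
    _ = κ n * r n + (1 - κ n) * r n := by
        rw [hd, hd2, norm_smul, norm_smul, Real.norm_eq_abs, Real.norm_eq_abs,
          abs_of_pos hk.1, abs_of_nonneg (by linarith [hk.2] : (0:ℝ) ≤ 1 - κ n)]
    _ = r n := by ring
  -- residual tends to 0
  have hr0 : Tendsto r atTop (𝓝 0) := by
    have hbdd : BddBelow (Set.range r) := ⟨0, by rintro x ⟨n, rfl⟩; exact hr_nonneg n⟩
    have htend := tendsto_atTop_ciInf hr_anti hbdd
    set c : ℝ := ⨅ n, r n with hc_def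
    have hc_nonneg : 0 ≤ c := le_ciInf hr_nonneg
    have hc_le : ∀ n, c ≤ r n := fun n => ciInf_le hbdd n
    rcases eq_or_lt_of_le hc_nonneg with h | h
    · rwa [← h] at htend
    · exfalso
      apply hdiv
      -- partial sums of κ(1-κ)r² are bounded by telescoping
      have htel : ∀ N, ∑ n ∈ Finset.range N, κ n * (1 - κ n) * r n ^ 2
          ≤ ‖Y 0 - z0‖ ^ 2 - ‖Y N - z0‖ ^ 2 := by
        intro N
        induction N with
        | zero => simp
        | succ N ih =>
          rw [Finset.sum_range_succ]
          have := hfejer z0 hz0 N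
          linarith
      apply summable_of_sum_range_le (c := ‖Y 0 - z0‖ ^ 2 / c ^ 2)
      · intro n; have hk := hκ n; nlinarith [hk.1, hk.2]
      · intro N
        have h1 : ∀ n, κ n * (1 - κ n) * c ^ 2 ≤ κ n * (1 - κ n) * r n ^ 2 := by
          intro n; have hk := hκ n
          have hcr : c ^ 2 ≤ r n ^ 2 := by nlinarith [hc_le n, hc_nonneg]
          exact mul_le_mul_of_nonneg_left hcr
            (mul_nonneg hk.1.le (by linarith [hk.2]))
        have h2 : (∑ n ∈ Finset.range N, κ n * (1 - κ n)) * c ^ 2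
            ≤ ‖Y 0 - z0‖ ^ 2 := by
          rw [Finset.sum_mul]
          calc ∑ n ∈ Finset.range N, κ n * (1 - κ n) * c ^ 2
              ≤ ∑ n ∈ Finset.range N, κ n * (1 - κ n) * r n ^ 2 :=
                Finset.sum_le_sum fun n _ => h1 n
          _ ≤ ‖Y 0 - z0‖ ^ 2 - ‖Y N - z0‖ ^ 2 := htel N
          _ ≤ ‖Y 0 - z0‖ ^ 2 := by nlinarith [sq_nonneg ‖Y N - z0‖]
        rw [le_div_iff₀ (by positivity)]
        exact h2
  -- distances to fixed points converge
  have hconv : ∀ p : H, S p = p →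
      Tendsto (fun n => ‖Y n - p‖ ^ 2) atTop (𝓝 (⨅ n, ‖Y n - p‖ ^ 2)) := by
    intro p hp
    exact tendsto_atTop_ciInf (hanti p hp)
      ⟨0, by rintro x ⟨n, rfl⟩; exact sq_nonneg _⟩
  -- ultrafilter weak limits are fixed points
  have hU : ∀ U : Ultrafilter ℕ, ↑U ≤ (atTop : Filter ℕ) →
      ∃ x : H, S x = x ∧
        ∀ z : H, Tendsto (fun n => (inner ℝ (Y n) z : ℝ)) U (𝓝 (inner ℝ x z)) := by
    intro U hUle
    have hmemIcc : ∀ z : H, ∀ n, (inner ℝ (Y n) z : ℝ) ∈ Set.Icc (-(B * ‖z‖)) (B * ‖z‖) := by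
      intro z n
      have h1 : |(inner ℝ (Y n) z : ℝ)| ≤ ‖Y n‖ * ‖z‖ := abs_real_inner_le_norm _ _
      have h2 : ‖Y n‖ * ‖z‖ ≤ B * ‖z‖ :=
        mul_le_mul_of_nonneg_right (hYb n) (norm_nonneg z)
      constructor <;> [linarith [neg_abs_le (inner ℝ (Y n) z : ℝ)];
        linarith [le_abs_self (inner ℝ (Y n) z : ℝ)]]
    have hex : ∀ z : H, ∃ c : ℝ, Tendsto (fun n => (inner ℝ (Y n) z : ℝ)) U (𝓝 c) := by
      intro z
      obtain ⟨c, _, hc⟩ := (isCompact_Icc (a := -(B * ‖z‖)) (b := B * ‖z‖)).ultrafilter_le_nhds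
        (U.map (fun n => (inner ℝ (Y n) z : ℝ)))
        (by
          rw [Ultrafilter.coe_map, Filter.le_principal_iff, Filter.mem_map]
          exact Filter.univ_mem' (fun n => hmemIcc z n))
      exact ⟨c, by rwa [Ultrafilter.coe_map] at hc⟩
    choose φ hφ using hex
    have hadd : ∀ z w : H, φ (z + w) = φ z + φ w := by
      intro z w
      refine tendsto_nhds_unique (hφ (z + w)) ?_
      have := (hφ z).add (hφ w)
      simpa [inner_add_right] using this
    have hsmul : ∀ (c : ℝ) (z : H), φ (c • z) = c * φ z := by
      intro c z
      refine tendsto_nhds_unique (hφ (c • z)) ?_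
      have := (hφ z).const_mul c
      simpa [real_inner_smul_right] using this
    have hφbound : ∀ z : H, ‖φ z‖ ≤ B * ‖z‖ := by
      intro z
      have hmem : φ z ∈ Set.Icc (-(B * ‖z‖)) (B * ‖z‖) :=
        isClosed_Icc.mem_of_tendsto (hφ z) (Filter.Eventually.of_forall (hmemIcc z))
      rw [Real.norm_eq_abs, abs_le]
      exact ⟨by linarith [hmem.1], hmem.2⟩
    set f : H →L[ℝ] ℝ :=
      LinearMap.mkContinuous
        { toFun := φ
          map_add' := hadd
          map_smul' := fun c z => by simpa using hsmul c z } B hφbound with hf_def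
    obtain ⟨x, hx⟩ := (InnerProductSpace.toDual ℝ H).surjective f
    have hxz : ∀ z : H, (inner ℝ x z : ℝ) = φ z := by
      intro z
      have := congrFun (congrArg (fun g : StrongDual ℝ H => (g : H → ℝ)) hx) z
      simpa [InnerProductSpace.toDual_apply_apply, hf_def] using this
    have hweak : ∀ z : H, Tendsto (fun n => (inner ℝ (Y n) z : ℝ)) U (𝓝 (inner ℝ x z)) := by
      intro z; rw [hxz z]; exact hφ z
    -- demiclosedness: x is a fixed point
    have hkey : ∀ n, 2 * (inner ℝ (Y n - x) (x - S x) : ℝ) + ‖x - S x‖ ^ 2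
        ≤ 2 * r n * ‖Y n - x‖ + r n ^ 2 := by
      intro n
      have hA : ‖Y n - S x‖ ^ 2
          = ‖Y n - x‖ ^ 2 + 2 * (inner ℝ (Y n - x) (x - S x) : ℝ) + ‖x - S x‖ ^ 2 := by
        have : Y n - S x = (Y n - x) + (x - S x) := by abel
        rw [this, norm_add_sq_real]
      have hB1 : ‖Y n - S x‖ ≤ r n + ‖Y n - x‖ := by
        calc ‖Y n - S x‖ ≤ ‖Y n - S (Y n)‖ + ‖S (Y n) - S x‖ :=
            norm_sub_le_norm_sub_add_norm_sub _ _ _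
        _ ≤ r n + ‖Y n - x‖ := by
            have h1 : ‖Y n - S (Y n)‖ = r n := norm_sub_rev _ _
            have h2 := hS (Y n) x
            linarith
      have hB2 : ‖Y n - S x‖ ^ 2 ≤ (r n + ‖Y n - x‖) ^ 2 :=
        pow_le_pow_left₀ (norm_nonneg _) hB1 2
      have hexp : (r n + ‖Y n - x‖) ^ 2
          = r n ^ 2 + 2 * r n * ‖Y n - x‖ + ‖Y n - x‖ ^ 2 := by ring
      linarith [hA, hB2, hexp]
    have hlhs : Tendsto (fun n => 2 * (inner ℝ (Y n - x) (x - S x) : ℝ) + ‖x - S x‖ ^ 2)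
        U (𝓝 (‖x - S x‖ ^ 2)) := by
      have h1 : Tendsto (fun n => (inner ℝ (Y n - x) (x - S x) : ℝ)) U (𝓝 0) := by
        have h2 := (hweak (x - S x)).sub (tendsto_const_nhds
          (x := (inner ℝ x (x - S x) : ℝ)) (f := (U : Filter ℕ)))
        simp only [sub_self] at h2
        convert h2 using 2 with n
        rw [inner_sub_left]
      have := (h1.const_mul 2).add (tendsto_const_nhds (x := ‖x - S x‖ ^ 2))
      simpa using this
    have hrhs : Tendsto (fun n => 2 * r n * ‖Y n - x‖ + r n ^ 2) U (𝓝 0) := by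
      apply Tendsto.mono_left _ hUle
      have h1 : Tendsto (fun n => 2 * r n * ‖Y n - x‖) atTop (𝓝 0) := by
        have hb : ∀ n, ‖Y n - x‖ ≤ B + ‖x‖ := by
          intro n
          calc ‖Y n - x‖ ≤ ‖Y n‖ + ‖x‖ := norm_sub_le _ _
          _ ≤ B + ‖x‖ := by linarith [hYb n]
        refine squeeze_zero_norm (a := fun n => 2 * (B + ‖x‖) * r n) ?_ ?_
        · intro n
          rw [Real.norm_eq_abs, abs_of_nonneg
            (mul_nonneg (mul_nonneg (by norm_num) (hr_nonneg n)) (norm_nonneg _))]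
          show 2 * r n * ‖Y n - x‖ ≤ 2 * (B + ‖x‖) * r n
          nlinarith [hb n, hr_nonneg n]
        · simpa using hr0.const_mul (2 * (B + ‖x‖))
      have h2 : Tendsto (fun n => r n ^ 2) atTop (𝓝 0) := by
        have := hr0.mul hr0
        simpa [pow_two] using this
      have := h1.add h2
      simpa using this
    have hfix : S x = x := by
      have hle : ‖x - S x‖ ^ 2 ≤ 0 :=
        le_of_tendsto_of_tendsto' hlhs hrhs hkey
      have : ‖x - S x‖ = 0 := by nlinarith [norm_nonneg (x - S x)]
      have : x - S x = 0 := norm_eq_zero.mp this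
      have := sub_eq_zero.mp this
      exact this.symm
    exact ⟨x, hfix, hweak⟩
  -- uniqueness of ultrafilter weak limits
  have huniq : ∀ (x1 x2 : H) (U1 U2 : Ultrafilter ℕ),
      ↑U1 ≤ (atTop : Filter ℕ) → ↑U2 ≤ (atTop : Filter ℕ) →
      S x1 = x1 → S x2 = x2 →
      (∀ z : H, Tendsto (fun n => (inner ℝ (Y n) z : ℝ)) U1 (𝓝 (inner ℝ x1 z))) →
      (∀ z : H, Tendsto (fun n => (inner ℝ (Y n) z : ℝ)) U2 (𝓝 (inner ℝ x2 z))) →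
      x1 = x2 := by
    intro x1 x2 U1 U2 hU1 hU2 hfix1 hfix2 hw1 hw2
    have hform : ∀ n, (inner ℝ (Y n) (x1 - x2) : ℝ)
        = (‖Y n - x2‖ ^ 2 - ‖Y n - x1‖ ^ 2 + ‖x1‖ ^ 2 - ‖x2‖ ^ 2) / 2 := by
      intro n
      rw [inner_sub_right, norm_sub_sq_real, norm_sub_sq_real]
      ring
    set L1 := ⨅ n, ‖Y n - x1‖ ^ 2
    set L2 := ⨅ n, ‖Y n - x2‖ ^ 2
    have hA : Tendsto (fun n => (inner ℝ (Y n) (x1 - x2) : ℝ)) atTop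
        (𝓝 ((L2 - L1 + ‖x1‖ ^ 2 - ‖x2‖ ^ 2) / 2)) := by
      have h3 := ((((hconv x2 hfix2).sub (hconv x1 hfix1)).add_const
        (‖x1‖ ^ 2)).sub_const (‖x2‖ ^ 2)).div_const 2
      simp only [hform]
      exact h3
    have he1 : (inner ℝ x1 (x1 - x2) : ℝ) = (L2 - L1 + ‖x1‖ ^ 2 - ‖x2‖ ^ 2) / 2 :=
      tendsto_nhds_unique (hw1 (x1 - x2)) (hA.mono_left hU1)
    have he2 : (inner ℝ x2 (x1 - x2) : ℝ) = (L2 - L1 + ‖x1‖ ^ 2 - ‖x2‖ ^ 2) / 2 :=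
      tendsto_nhds_unique (hw2 (x1 - x2)) (hA.mono_left hU2)
    have : ‖x1 - x2‖ ^ 2 = 0 := by
      rw [← real_inner_self_eq_norm_sq, inner_sub_left, he1, he2]
      ring
    have : x1 - x2 = 0 := by
      have h := norm_eq_zero.mp (by nlinarith [norm_nonneg (x1 - x2)] : ‖x1 - x2‖ = 0)
      exact h
    exact sub_eq_zero.mp this
  -- conclude
  obtain ⟨U0, hU0⟩ := Filter.exists_ultrafilter_le (atTop : Filter ℕ)
  obtain ⟨x0, hx0fix, hx0⟩ := hU U0 hU0
  refine ⟨x0, hx0fix, ?_⟩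
  intro z
  rw [tendsto_iff_ultrafilter]
  intro U hUle
  obtain ⟨x, hxfix, hx⟩ := hU U hUle
  have hxe : x = x0 := huniq x x0 U U0 hUle hU0 hxfix hx0fix hx hx0
  rw [← hxe]
  exact hx z
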